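/- Let λ > 0, c ≥ 0. Then ∫_0^∞ r²·λ·(c + 2πr)·e^{-λ(cr + πr²)} dr = 1/(πλ) - e^{c²λ/(4π)}·(c/(π√λ))·(1 - Φ(c·√(λ/(2π)))), where Φ is the standard normal CDF. -/

import Mathlib

open Real MeasureTheory Set Filter

lemma pore_aux_integrable (b k : ℝ) (hb : 0 < b) (hk : 0 ≤ k) (n : ℕ) :
    IntegrableOn (fun r : ℝ => r ^ n * Real.exp (-(b * r ^ 2) - k * r)) (Set.Ioi 0) := by
  have h0 : IntegrableOn (fun r : ℝ => r ^ (n : ℝ) * Real.exp (-b * r ^ 2)) (Set.Ioi 0) :=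
    integrableOn_rpow_mul_exp_neg_mul_sq hb
      (lt_of_lt_of_le (by norm_num) (Nat.cast_nonneg n))
  refine h0.mono' ?_ ?_
  · exact (((continuous_pow n).mul (by continuity)).aestronglyMeasurable)
  · filter_upwards [ae_restrict_mem measurableSet_Ioi] with r hr
    have hr0 : (0:ℝ) < r := hr
    rw [Real.norm_eq_abs, abs_mul, abs_of_nonneg (pow_nonneg hr0.le n),
      abs_of_nonneg (Real.exp_pos _).le, Real.rpow_natCast]
    have : Real.exp (-(b * r ^ 2) - k * r) ≤ Real.exp (-b * r ^ 2) := by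
      apply Real.exp_le_exp.2; nlinarith [mul_nonneg hk hr0.le]
    exact mul_le_mul_of_nonneg_left this (pow_nonneg hr0.le n)

lemma pore_shift (f : ℝ → ℝ) (a : ℝ) :
    ∫ x in Ioi (0:ℝ), f (x + a) = ∫ x in Ioi a, f x := by
  rw [← integral_indicator measurableSet_Ioi, ← integral_indicator measurableSet_Ioi,
    ← integral_add_right_eq_self (fun x => (Ioi a).indicator f x) a]
  congr 1
  ext x
  by_cases h : x ∈ Ioi (0:ℝ)
  · rw [indicator_of_mem h, indicator_of_mem (by simpa using h)]
  · rw [indicator_of_notMem h, indicator_of_notMem (by simpa using h)]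

/-- Second moment of the pore radius:
`∫_0^∞ r²·λ(c + 2πr)e^{-λ(cr + πr²)} dr
  = 1/(πλ) - e^{c²λ/(4π)}·(c/(π√λ))·(1 - Φ(c√(λ/(2π))))`. -/
theorem pore_radius_second_moment (lam c : ℝ) (hl : 0 < lam) (hc : 0 ≤ c) :
    ∫ r in Set.Ioi (0 : ℝ),
        r ^ 2 * (lam * (c + 2 * π * r) * Real.exp (-(lam * (c * r + π * r ^ 2))))
      = 1 / (π * lam)
        - Real.exp (c ^ 2 * lam / (4 * π)) * (c / (π * Real.sqrt lam))
          * (1 - ∫ t in Set.Iic (c * Real.sqrt (lam / (2 * π))),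
                (Real.sqrt (2 * π))⁻¹ * Real.exp (-t ^ 2 / 2)) := by
  have hpi := Real.pi_pos
  set b : ℝ := lam * π with hbdef
  have hb : 0 < b := by positivity
  set k : ℝ := lam * c with hkdef
  have hk : 0 ≤ k := by positivity
  set a : ℝ := c / (2 * π) with hadef
  have ha : 0 ≤ a := by positivity
  set d : ℝ := c ^ 2 * lam / (4 * π) with hddef
  have hdba : d = b * a ^ 2 := by rw [hddef, hbdef, hadef]; field_simp; ring
  set E : ℝ → ℝ := fun r => Real.exp (-(b * r ^ 2) - k * r) with hEdef
  -- rewrite the integrand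
  have hE : ∀ r : ℝ, Real.exp (-(lam * (c * r + π * r ^ 2))) = E r := by
    intro r; rw [hEdef]; congr 1; rw [hbdef, hkdef]; ring
  have hX : ∀ r : ℝ, Real.exp (-(b * (r + a) ^ 2)) = Real.exp (-d) * E r := by
    intro r
    rw [hEdef, ← Real.exp_add]
    congr 1
    rw [hddef, hbdef, hkdef, hadef]; field_simp; ring
  -- integrability facts
  have int1 : IntegrableOn (fun r : ℝ => 2 * r * E r) (Ioi 0) := by
    have h := (pore_aux_integrable b k hb hk 1).const_mul 2
    exact IntegrableOn.congr_fun h (fun r _ => by simp [hEdef]; ring) measurableSet_Ioi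
  have int0 : IntegrableOn (fun r : ℝ => Real.exp (-(b * (r + a) ^ 2))) (Ioi 0) := by
    have h := (pore_aux_integrable b k hb hk 0).const_mul (Real.exp (-d))
    exact IntegrableOn.congr_fun h (fun r _ => by simp [hX r, hEdef]) measurableSet_Ioi
  have intB1 : IntegrableOn (fun r : ℝ => 2 * (r + a) * Real.exp (-(b * (r + a) ^ 2)))
      (Ioi 0) := by
    have h1 := ((pore_aux_integrable b k hb hk 1).const_mul (2 * Real.exp (-d))).add
      ((pore_aux_integrable b k hb hk 0).const_mul (2 * a * Real.exp (-d)))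
    exact IntegrableOn.congr_fun h1 (fun r _ => by simp [hX r, hEdef]; ring) measurableSet_Ioi
  have int3 : IntegrableOn (fun r : ℝ => r ^ 2 * (2 * b * r + k) * E r) (Ioi 0) := by
    have h1 := ((pore_aux_integrable b k hb hk 3).const_mul (2 * b)).add
      ((pore_aux_integrable b k hb hk 2).const_mul k)
    exact IntegrableOn.congr_fun h1 (fun r _ => by simp [hEdef]; ring) measurableSet_Ioi
  -- Step A : integration by parts
  have stepA : ∫ r in Ioi (0:ℝ), r ^ 2 * (2 * b * r + k) * E r
      = ∫ r in Ioi (0:ℝ), 2 * r * E r := by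
    have hderiv : ∀ r ∈ Ici (0:ℝ), HasDerivAt (fun r : ℝ => -(r ^ 2 * E r))
        (r ^ 2 * (2 * b * r + k) * E r - 2 * r * E r) r := by
      intro r _
      have hu : HasDerivAt (fun r : ℝ => -(b * r ^ 2) - k * r) (-(b * (2 * r)) - k) r := by
        have h1 := (((hasDerivAt_pow 2 r).const_mul b).neg).sub ((hasDerivAt_id r).const_mul k)
        exact h1.congr_deriv (by simp)
      have hE' : HasDerivAt E (Real.exp (-(b * r ^ 2) - k * r) * (-(b * (2 * r)) - k)) r :=
        hu.exp
      have h2 := ((hasDerivAt_pow 2 r).mul hE').neg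
      refine h2.congr_deriv ?_
      simp [hEdef]; ring
    have htend : Tendsto (fun r : ℝ => -(r ^ 2 * E r)) atTop (nhds 0) := by
      rw [show (0:ℝ) = -0 by norm_num]
      apply Tendsto.neg
      have hcomp : Tendsto (fun r : ℝ => (1 / b) * ((b * r ^ 2) * Real.exp (-(b * r ^ 2))))
          atTop (nhds 0) := by
        have h3 : Tendsto (fun t : ℝ => t * Real.exp (-t)) atTop (nhds 0) := by
          simpa using tendsto_pow_mul_exp_neg_atTop_nhds_zero 1
        have h2 : Tendsto (fun r : ℝ => b * r ^ 2) atTop atTop :=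
          (tendsto_pow_atTop (two_ne_zero)).const_mul_atTop hb
        simpa using (h3.comp h2).const_mul (1 / b)
      apply squeeze_zero' (g := fun r => (1 / b) * ((b * r ^ 2) * Real.exp (-(b * r ^ 2))))
        ?_ ?_ hcomp
      · filter_upwards [eventually_ge_atTop (0:ℝ)] with r hr
        positivity
      · filter_upwards [eventually_ge_atTop (0:ℝ)] with r hr
        have h4 : E r ≤ Real.exp (-(b * r ^ 2)) := by
          apply Real.exp_le_exp.2; nlinarith [mul_nonneg hk hr]
        have h5 : r ^ 2 * E r ≤ r ^ 2 * Real.exp (-(b * r ^ 2)) :=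
          mul_le_mul_of_nonneg_left h4 (by positivity)
        calc r ^ 2 * E r ≤ r ^ 2 * Real.exp (-(b * r ^ 2)) := h5
          _ = (1 / b) * ((b * r ^ 2) * Real.exp (-(b * r ^ 2))) := by
              field_simp
    have hint : IntegrableOn
        (fun r : ℝ => r ^ 2 * (2 * b * r + k) * E r - 2 * r * E r) (Ioi 0) := int3.sub int1
    have h0 := integral_Ioi_of_hasDerivAt_of_tendsto' hderiv hint htend
    rw [integral_sub int3 int1] at h0
    have : -(0 ^ 2 * E 0) = (0:ℝ) := by simp
    rw [this, zero_sub, neg_zero] at h0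
    linarith
  -- Step B1 : first FTC integral
  have stepB1 : ∫ r in Ioi (0:ℝ), 2 * (r + a) * Real.exp (-(b * (r + a) ^ 2))
      = Real.exp (-(b * a ^ 2)) / b := by
    have hderiv : ∀ r ∈ Ici (0:ℝ),
        HasDerivAt (fun r : ℝ => -(Real.exp (-(b * (r + a) ^ 2)) / b))
        (2 * (r + a) * Real.exp (-(b * (r + a) ^ 2))) r := by
      intro r _
      have hu : HasDerivAt (fun r : ℝ => -(b * (r + a) ^ 2)) (-(b * (2 * (r + a)))) r := by
        have h1 := ((((hasDerivAt_id r).add_const a).pow 2).const_mul b).neg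
        exact h1.congr_deriv (by simp)
      have h2 := (hu.exp.div_const b).neg
      refine h2.congr_deriv ?_
      field_simp
    have htend : Tendsto (fun r : ℝ => -(Real.exp (-(b * (r + a) ^ 2)) / b)) atTop (nhds 0) := by
      rw [show (0:ℝ) = -(0 / b) by simp]
      apply Tendsto.neg
      apply Tendsto.div_const
      apply Real.tendsto_exp_atBot.comp
      apply Filter.tendsto_neg_atTop_atBot.comp
      apply Tendsto.const_mul_atTop hb
      exact (tendsto_pow_atTop two_ne_zero).comp (tendsto_atTop_add_const_right atTop a tendsto_id)
    have h0 := integral_Ioi_of_hasDerivAt_of_tendsto' hderiv intB1 htend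
    rw [h0]; simp
  -- Step B2 : shift and scale
  set s : ℝ := Real.sqrt (2 * b) with hsdef
  have hs : 0 < s := Real.sqrt_pos.2 (by positivity)
  have hs2 : s = Real.sqrt lam * Real.sqrt (2 * π) := by
    rw [hsdef, ← Real.sqrt_mul hl.le, hbdef]; ring_nf
  have hsa : s * a = c * Real.sqrt (lam / (2 * π)) := by
    have h1 : s = Real.sqrt (lam / (2 * π)) * (2 * π) := by
      rw [hsdef, show 2 * b = lam / (2 * π) * (2 * π) ^ 2 by rw [hbdef]; field_simp,
        Real.sqrt_mul (by positivity), Real.sqrt_sq (by positivity)]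
    rw [h1, hadef]; field_simp
  have stepB2 : ∫ r in Ioi (0:ℝ), Real.exp (-(b * (r + a) ^ 2))
      = s⁻¹ * ∫ t in Ioi (c * Real.sqrt (lam / (2 * π))), Real.exp (-t ^ 2 / 2) := by
    rw [pore_shift (fun u => Real.exp (-(b * u ^ 2))) a]
    have hpt : ∀ u : ℝ, Real.exp (-(b * u ^ 2)) = Real.exp (-(s * u) ^ 2 / 2) := by
      intro u; congr 1
      rw [mul_pow, hsdef, Real.sq_sqrt (by positivity : (0:ℝ) ≤ 2 * b)]; ring
    simp_rw [hpt]
    rw [integral_comp_mul_left_Ioi (fun t => Real.exp (-t ^ 2 / 2)) a hs, smul_eq_mul, hsa]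
  -- total Gaussian mass
  have hgint : Integrable (fun t : ℝ => Real.exp (-t ^ 2 / 2)) := by
    have h1 := integrable_exp_neg_mul_sq (by norm_num : (0:ℝ) < 1/2)
    exact h1.congr (ae_of_all _ fun t => by norm_num; ring_nf)
  have htot : ∫ t : ℝ, Real.exp (-t ^ 2 / 2) = Real.sqrt (2 * π) := by
    have h1 := integral_gaussian (1/2 : ℝ)
    rw [show (π / (1/2 : ℝ)) = 2 * π by ring] at h1
    rw [← h1]
    congr 1; ext t; congr 1; ring
  have htail : ∫ t in Ioi (c * Real.sqrt (lam / (2 * π))), Real.exp (-t ^ 2 / 2)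
      = Real.sqrt (2 * π) - ∫ t in Iic (c * Real.sqrt (lam / (2 * π))),
          Real.exp (-t ^ 2 / 2) := by
    have h1 := intervalIntegral.integral_Iic_add_Ioi (b := c * Real.sqrt (lam / (2 * π)))
      hgint.integrableOn hgint.integrableOn
    rw [htot] at h1; linarith
  -- assemble
  have key : ∫ r in Ioi (0:ℝ),
      r ^ 2 * (lam * (c + 2 * π * r) * Real.exp (-(lam * (c * r + π * r ^ 2))))
      = ∫ r in Ioi (0:ℝ), 2 * r * E r := by
    rw [← stepA]
    apply setIntegral_congr_fun measurableSet_Ioi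
    intro r _
    simp only [hE r, hbdef, hkdef]; ring
  have split : ∫ r in Ioi (0:ℝ), 2 * r * E r
      = Real.exp d * (∫ r in Ioi (0:ℝ), 2 * (r + a) * Real.exp (-(b * (r + a) ^ 2)))
        - Real.exp d * (2 * a) * ∫ r in Ioi (0:ℝ), Real.exp (-(b * (r + a) ^ 2)) := by
    have heq : ∫ r in Ioi (0:ℝ), 2 * r * E r
        = ∫ r in Ioi (0:ℝ), (Real.exp d * (2 * (r + a) * Real.exp (-(b * (r + a) ^ 2)))
            - Real.exp d * (2 * a) * Real.exp (-(b * (r + a) ^ 2))) := by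
      apply setIntegral_congr_fun measurableSet_Ioi
      intro r _
      simp only []
      have h1 : Real.exp d * Real.exp (-(b * (r + a) ^ 2)) = E r := by
        rw [hX r, ← mul_assoc, ← Real.exp_add]; simp
      calc 2 * r * E r = 2 * (r + a) * E r - 2 * a * E r := by ring
        _ = Real.exp d * (2 * (r + a) * Real.exp (-(b * (r + a) ^ 2)))
            - Real.exp d * (2 * a) * Real.exp (-(b * (r + a) ^ 2)) := by
            rw [show Real.exp d * (2 * (r + a) * Real.exp (-(b * (r + a) ^ 2)))
              = 2 * (r + a) * (Real.exp d * Real.exp (-(b * (r + a) ^ 2))) by ring,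
              show Real.exp d * (2 * a) * Real.exp (-(b * (r + a) ^ 2))
              = 2 * a * (Real.exp d * Real.exp (-(b * (r + a) ^ 2))) by ring, h1]
    rw [heq, integral_sub (intB1.const_mul _) (int0.const_mul (Real.exp d * (2 * a))),
      integral_const_mul]
    congr 1
    rw [show (fun r : ℝ => Real.exp d * (2 * a) * Real.exp (-(b * (r + a) ^ 2)))
      = fun r : ℝ => (Real.exp d * (2 * a)) * Real.exp (-(b * (r + a) ^ 2)) from rfl,
      integral_const_mul]
  rw [key, split, stepB1, stepB2, htail]
  -- final algebra
  have hexp1 : Real.exp d * (Real.exp (-(b * a ^ 2)) / b) = 1 / (π * lam) := by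
    rw [hdba, ← mul_div_assoc, ← Real.exp_add, add_neg_cancel, Real.exp_zero, hbdef]
    rw [mul_comm]
  rw [hexp1]
  congr 1
  -- remaining: exp d * 2a * (s⁻¹ * (√(2π) - J)) = exp(c²lam/(4π)) * (c/(π√lam)) * (1 - (√(2π))⁻¹ J)
  rw [integral_const_mul]
  have hsl : (0:ℝ) < Real.sqrt lam := Real.sqrt_pos.2 hl
  have hs2p : (0:ℝ) < Real.sqrt (2 * π) := Real.sqrt_pos.2 (by positivity)
  rw [hs2, hadef]
  field_simp
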